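/- Let E, F be n×d real matrices with orthonormal columns, and let Ω* be the orthogonal d×d matrix minimizing ‖EΩ − F‖_F over orthogonal matrices Ω. Then ‖EΩ* − F‖_F ≤ ‖EEᵀ − FFᵀ‖_F ≤ √2 · ‖EΩ* − F‖_F. -/

import Mathlib

open Matrix BigOperators

/-- Squared Frobenius norm of a real matrix. -/
noncomputable def frobSq {n m : ℕ} (M : Matrix (Fin n) (Fin m) ℝ) : ℝ :=
  ∑ i, ∑ j, (M i j) ^ 2

/-- Frobenius norm of a real matrix. -/
noncomputable def frob {n m : ℕ} (M : Matrix (Fin n) (Fin m) ℝ) : ℝ :=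
  Real.sqrt (frobSq M)

lemma frobSq_nonneg {n m : ℕ} (M : Matrix (Fin n) (Fin m) ℝ) : 0 ≤ frobSq M := by
  unfold frobSq; positivity

lemma frobSq_eq_trace {n m : ℕ} (M : Matrix (Fin n) (Fin m) ℝ) :
    frobSq M = (Mᵀ * M).trace := by
  unfold frobSq
  rw [Matrix.trace]
  rw [Finset.sum_comm]
  congr 1
  ext j
  simp [Matrix.diag, Matrix.mul_apply, Matrix.transpose_apply, pow_two]

lemma real_conjT {a b : ℕ} (A : Matrix (Fin a) (Fin b) ℝ) : Aᴴ = Aᵀ := by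
  ext i j; simp [Matrix.conjTranspose_apply]

lemma psd_diag_nonneg {d : ℕ} {P : Matrix (Fin d) (Fin d) ℝ} (hP : P.PosSemidef) (j : Fin d) :
    0 ≤ P j j := by
  exact hP.diag_nonneg

lemma real_spectral {d : ℕ} (S : Matrix (Fin d) (Fin d) ℝ) (hS : S.IsHermitian) :
    ∃ Q : Matrix (Fin d) (Fin d) ℝ, Qᵀ * Q = 1 ∧ Q * Qᵀ = 1 ∧ Qᵀ * S * Q = diagonal hS.eigenvalues := by
  set Q : Matrix (Fin d) (Fin d) ℝ := (hS.eigenvectorUnitary : Matrix (Fin d) (Fin d) ℝ) with hQdef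
  have h1' : Qᵀ * Q = 1 := by
    have := (Matrix.mem_unitaryGroup_iff'.mp hS.eigenvectorUnitary.2)
    rw [Matrix.star_eq_conjTranspose, real_conjT] at this; exact this
  have h1'' : Q * Qᵀ = 1 := by
    have := (Matrix.mem_unitaryGroup_iff.mp hS.eigenvectorUnitary.2)
    rw [Matrix.star_eq_conjTranspose, real_conjT] at this; exact this
  refine ⟨Q, h1', h1'', ?_⟩
  have h2 := hS.spectral_theorem
  have h3 : star Q = Qᵀ := by
    ext i j
    simp [Matrix.star_apply]
  rw [Unitary.conjStarAlgAut_apply, ← hQdef, h3] at h2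
  calc Qᵀ * S * Q
      = Qᵀ * (Q * diagonal (RCLike.ofReal ∘ hS.eigenvalues) * Qᵀ) * Q := by rw [← h2]
    _ = diagonal hS.eigenvalues := by
        rw [← mul_assoc, ← mul_assoc, h1', one_mul, mul_assoc, h1', mul_one]; rfl

/-- Core lemma: a contraction `M` admits an orthogonal `Ω` with `tr(MᵀM) ≤ tr(ΩᵀM)`. -/
lemma key {d : ℕ} (M : Matrix (Fin d) (Fin d) ℝ) (hM : (1 - Mᵀ * M).PosSemidef) :
    ∃ Ω : Matrix (Fin d) (Fin d) ℝ, Ωᵀ * Ω = 1 ∧ (Mᵀ * M).trace ≤ (Ωᵀ * M).trace := by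
  have hS : (Mᵀ * M).IsHermitian := by
    rw [Matrix.IsHermitian, real_conjT, Matrix.transpose_mul, Matrix.transpose_transpose]
  obtain ⟨Q, hQ1, hQ2, hQ3⟩ := real_spectral _ hS
  set μ := hS.eigenvalues with hμdef
  set N : Matrix (Fin d) (Fin d) ℝ := M * Q with hNdef
  have hN : Nᵀ * N = diagonal μ := by
    rw [hNdef, Matrix.transpose_mul, ← hQ3]; simp only [Matrix.mul_assoc]
  have hcol : ∀ j, μ j = ∑ i, N i j ^ 2 := by
    intro j
    have : (Nᵀ * N) j j = diagonal μ j j := by rw [hN]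
    simpa [Matrix.mul_apply, Matrix.transpose_apply, pow_two, Matrix.diagonal_apply_eq] using this.symm
  have hμ0 : ∀ j, 0 ≤ μ j := by
    intro j; rw [hcol j]; positivity
  have hsub : (1 : Matrix (Fin d) (Fin d) ℝ) - Nᵀ * N = Qᵀ * (1 - Mᵀ * M) * Q := by
    rw [hNdef, Matrix.transpose_mul]
    rw [Matrix.mul_sub, Matrix.sub_mul, Matrix.mul_one, hQ1]
    rw [← Matrix.mul_assoc, ← Matrix.mul_assoc]
  have hpsd : ((1 : Matrix (Fin d) (Fin d) ℝ) - Nᵀ * N).PosSemidef := by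
    rw [hsub, ← real_conjT Q]
    exact hM.conjTranspose_mul_mul_same Q
  have hμ1 : ∀ j, μ j ≤ 1 := by
    intro j
    have h := psd_diag_nonneg hpsd j
    have : ((1 : Matrix (Fin d) (Fin d) ℝ) - Nᵀ * N) j j = 1 - μ j := by
      rw [hN]; simp [Matrix.one_apply, Matrix.diagonal_apply_eq]
    linarith [this ▸ h]
  set s : Set (Fin d) := {j | μ j ≠ 0} with hsdef
  set v : Fin d → EuclideanSpace ℝ (Fin d) :=
    fun j => WithLp.toLp 2 ((Real.sqrt (μ j))⁻¹ • (fun i => N i j)) with hvdef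
  have hinner : ∀ j k, (inner ℝ (v j) (v k) : ℝ)
      = (Real.sqrt (μ j))⁻¹ * (Real.sqrt (μ k))⁻¹ * diagonal μ j k := by
    intro j k
    rw [← hN]
    simp only [hvdef, PiLp.inner_apply, RCLike.inner_apply, starRingEnd_apply, star_trivial,
      PiLp.smul_apply, Pi.smul_apply, smul_eq_mul, Matrix.mul_apply, Matrix.transpose_apply,
      PiLp.toLp_apply]
    rw [Finset.mul_sum]
    exact Finset.sum_congr rfl fun i _ => by ring
  have hortho : Orthonormal ℝ (s.restrict v) := by
    rw [orthonormal_iff_ite]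
    rintro ⟨j, hj⟩ ⟨k, hk⟩
    rcases eq_or_ne j k with rfl | hjk
    · simp only [Subtype.mk.injEq, if_pos rfl, Set.restrict_apply]
      change inner ℝ (v j) (v j) = _
      rw [hinner]
      rw [Matrix.diagonal_apply_eq]
      have hμpos : 0 < μ j := lt_of_le_of_ne (hμ0 j) (Ne.symm hj)
      have hs : (0:ℝ) < Real.sqrt (μ j) := Real.sqrt_pos.mpr hμpos
      have h2 : Real.sqrt (μ j) * Real.sqrt (μ j) = μ j := Real.mul_self_sqrt (le_of_lt hμpos)
      field_simp
      rw [if_pos trivial, mul_one, Real.sq_sqrt (hμ0 j)]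
    · have : (⟨j, hj⟩ : s) ≠ ⟨k, hk⟩ := by simp [hjk]
      rw [if_neg this]
      change inner ℝ (v j) (v k) = _
      rw [hinner, Matrix.diagonal_apply_ne _ hjk]
      ring
  obtain ⟨b, hb⟩ := hortho.exists_orthonormalBasis_extension_of_card_eq
    (by simp [finrank_euclideanSpace])
  set W : Matrix (Fin d) (Fin d) ℝ := Matrix.of (fun i j => b j i) with hWdef
  have hW : Wᵀ * W = 1 := by
    ext j k
    have := orthonormal_iff_ite.mp b.orthonormal j k
    simp only [PiLp.inner_apply, RCLike.inner_apply, starRingEnd_apply, star_trivial] at this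
    simp only [Matrix.mul_apply, Matrix.transpose_apply, hWdef, Matrix.of_apply, Matrix.one_apply]
    rw [← this]; exact Finset.sum_congr rfl fun _ _ => mul_comm _ _
  refine ⟨W * Qᵀ, ?_, ?_⟩
  · rw [Matrix.transpose_mul, Matrix.transpose_transpose, Matrix.mul_assoc,
      ← Matrix.mul_assoc Wᵀ, hW, Matrix.one_mul, hQ2]
  · have ht1 : ((W * Qᵀ)ᵀ * M).trace = (Wᵀ * N).trace := by
      rw [Matrix.transpose_mul, Matrix.transpose_transpose, Matrix.mul_assoc,
        Matrix.trace_mul_comm, hNdef, Matrix.mul_assoc]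
    have ht2 : (Mᵀ * M).trace = ∑ j, μ j := by
      have h5 : (Qᵀ * (Mᵀ * M) * Q).trace = (Mᵀ * M).trace := by
        rw [Matrix.trace_mul_comm, ← Matrix.mul_assoc, hQ2, Matrix.one_mul]
      rw [← h5, hQ3, Matrix.trace_diagonal]
    rw [ht1, ht2]
    have ht3 : (Wᵀ * N).trace = ∑ j, ∑ i, b j i * N i j := by
      rw [Matrix.trace]
      simp [Matrix.diag, Matrix.mul_apply, Matrix.transpose_apply, hWdef]
    rw [ht3]
    apply Finset.sum_le_sum
    intro j _
    by_cases hj : j ∈ s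
    · rw [hb j hj]
      have hsum : ∑ i, v j i * N i j = (Real.sqrt (μ j))⁻¹ * μ j := by
        simp only [hvdef, PiLp.smul_apply, Pi.smul_apply, smul_eq_mul, PiLp.toLp_apply]
        rw [hcol j, Finset.mul_sum]
        exact Finset.sum_congr rfl fun i _ => by ring
      rw [hsum]
      have hμpos : 0 < μ j := lt_of_le_of_ne (hμ0 j) (Ne.symm hj)
      have hs0 : 0 < Real.sqrt (μ j) := Real.sqrt_pos.mpr hμpos
      have h2 : Real.sqrt (μ j) * Real.sqrt (μ j) = μ j := Real.mul_self_sqrt (le_of_lt hμpos)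
      have hle1 : Real.sqrt (μ j) ≤ 1 := Real.sqrt_le_one.mpr (hμ1 j)
      have h3 : (Real.sqrt (μ j))⁻¹ * μ j = Real.sqrt (μ j) := by
        field_simp
        rw [Real.sq_sqrt (hμ0 j)]
      rw [h3]
      nlinarith
    · have hμj : μ j = 0 := by simpa [hsdef] using hj
      have hNz : ∀ i, N i j = 0 := by
        intro i
        have h0 : ∑ i, N i j ^ 2 = 0 := by rw [← hcol j, hμj]
        have := Finset.sum_eq_zero_iff_of_nonneg (fun i _ => sq_nonneg (N i j)) |>.mp h0 i
          (Finset.mem_univ i)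
        exact pow_eq_zero_iff (n := 2) (by norm_num) |>.mp this
      rw [hμj]
      apply Finset.sum_nonneg
      intro i _
      rw [hNz i, mul_zero]

section main
variable {n d : ℕ} (E F : Matrix (Fin n) (Fin d) ℝ)

lemma expandA (hE : Eᵀ * E = 1) (hF : Fᵀ * F = 1)
    (Ω : Matrix (Fin d) (Fin d) ℝ) (hΩ : Ωᵀ * Ω = 1) :
    frobSq (E * Ω - F) = 2 * (d : ℝ) - 2 * (Ωᵀ * (Eᵀ * F)).trace := by
  rw [frobSq_eq_trace]
  have e1 : Ωᵀ * Eᵀ * (E * Ω) = 1 := by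
    rw [Matrix.mul_assoc Ωᵀ Eᵀ (E * Ω), ← Matrix.mul_assoc Eᵀ E Ω, hE, Matrix.one_mul, hΩ]
  have e3 : Fᵀ * (E * Ω) = (Ωᵀ * (Eᵀ * F))ᵀ := by
    rw [Matrix.transpose_mul, Matrix.transpose_mul, Matrix.transpose_transpose,
      Matrix.transpose_transpose, Matrix.mul_assoc]
  have expand : (E * Ω - F)ᵀ * (E * Ω - F)
      = 1 - Ωᵀ * (Eᵀ * F) - (Ωᵀ * (Eᵀ * F))ᵀ + 1 := by
    rw [Matrix.transpose_sub, Matrix.transpose_mul, Matrix.sub_mul, Matrix.mul_sub,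
      Matrix.mul_sub, e1, e3, hF, Matrix.mul_assoc]
    abel
  rw [expand]
  rw [Matrix.trace_add, Matrix.trace_sub, Matrix.trace_sub, Matrix.trace_transpose,
    Matrix.trace_one]
  simp
  ring

lemma expandB (hE : Eᵀ * E = 1) (hF : Fᵀ * F = 1) :
    frobSq (E * Eᵀ - F * Fᵀ) = 2 * (d : ℝ) - 2 * ((Eᵀ * F)ᵀ * (Eᵀ * F)).trace := by
  rw [frobSq_eq_trace]
  have hsymm : (E * Eᵀ - F * Fᵀ)ᵀ = E * Eᵀ - F * Fᵀ := by
    rw [Matrix.transpose_sub, Matrix.transpose_mul, Matrix.transpose_mul,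
      Matrix.transpose_transpose, Matrix.transpose_transpose]
  rw [hsymm, Matrix.sub_mul, Matrix.mul_sub, Matrix.mul_sub]
  rw [Matrix.trace_sub, Matrix.trace_sub, Matrix.trace_sub]
  have t1 : (E * Eᵀ * (E * Eᵀ)).trace = (d : ℝ) := by
    rw [Matrix.mul_assoc E Eᵀ (E * Eᵀ), ← Matrix.mul_assoc Eᵀ E Eᵀ, hE, Matrix.one_mul,
      Matrix.trace_mul_comm, hE, Matrix.trace_one]
    simp
  have t4 : (F * Fᵀ * (F * Fᵀ)).trace = (d : ℝ) := by
    rw [Matrix.mul_assoc F Fᵀ (F * Fᵀ), ← Matrix.mul_assoc Fᵀ F Fᵀ, hF, Matrix.one_mul,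
      Matrix.trace_mul_comm, hF, Matrix.trace_one]
    simp
  have t2 : (E * Eᵀ * (F * Fᵀ)).trace = ((Eᵀ * F)ᵀ * (Eᵀ * F)).trace := by
    rw [Matrix.mul_assoc E Eᵀ (F * Fᵀ), Matrix.trace_mul_comm]
    have h9 : Eᵀ * (F * Fᵀ) * E = Eᵀ * F * (Fᵀ * E) := by
      simp [Matrix.mul_assoc]
    rw [h9, Matrix.trace_mul_comm, Matrix.transpose_mul, Matrix.transpose_transpose]
  have t3 : (F * Fᵀ * (E * Eᵀ)).trace = ((Eᵀ * F)ᵀ * (Eᵀ * F)).trace := by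
    rw [Matrix.trace_mul_comm, t2]
  rw [t1, t2, t3, t4]
  ring

lemma expandC (M Ω : Matrix (Fin d) (Fin d) ℝ) (hΩ : Ωᵀ * Ω = 1) :
    frobSq (M - Ω) = (Mᵀ * M).trace - 2 * (Ωᵀ * M).trace + (d : ℝ) := by
  rw [frobSq_eq_trace]
  rw [Matrix.transpose_sub, Matrix.sub_mul, Matrix.mul_sub, Matrix.mul_sub]
  rw [Matrix.trace_sub, Matrix.trace_sub, Matrix.trace_sub, hΩ, Matrix.trace_one]
  have : (Mᵀ * Ω).trace = (Ωᵀ * M).trace := by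
    rw [← Matrix.trace_transpose (Mᵀ * Ω), Matrix.transpose_mul, Matrix.transpose_transpose]
  rw [this]
  simp
  ring

lemma contraction_psd (hE : Eᵀ * E = 1) (hF : Fᵀ * F = 1) :
    ((1 : Matrix (Fin d) (Fin d) ℝ) - (Eᵀ * F)ᵀ * (Eᵀ * F)).PosSemidef := by
  set P : Matrix (Fin n) (Fin n) ℝ := 1 - E * Eᵀ with hPdef
  have hPP : P * P = P := by
    have h4 : E * Eᵀ * (E * Eᵀ) = E * Eᵀ := by
      rw [Matrix.mul_assoc E Eᵀ (E * Eᵀ), ← Matrix.mul_assoc Eᵀ E Eᵀ, hE, Matrix.one_mul]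
    rw [hPdef, Matrix.sub_mul, Matrix.mul_sub, Matrix.mul_sub, Matrix.one_mul, Matrix.mul_one, h4]
    simp only [Matrix.one_mul, Matrix.mul_one]
    abel
  have hPsymm : Pᵀ = P := by
    rw [hPdef, Matrix.transpose_sub, Matrix.transpose_one, Matrix.transpose_mul,
      Matrix.transpose_transpose]
  have hmain : (1 : Matrix (Fin d) (Fin d) ℝ) - (Eᵀ * F)ᵀ * (Eᵀ * F) = (P * F)ᵀ * (P * F) := by
    have h5 : (P * F)ᵀ * (P * F) = Fᵀ * (P * F) := by
      rw [Matrix.transpose_mul, hPsymm, Matrix.mul_assoc Fᵀ P (P * F), ← Matrix.mul_assoc P P F,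
        hPP]
    rw [h5, hPdef, Matrix.sub_mul, Matrix.one_mul, Matrix.mul_sub, hF]
    congr 1
    rw [Matrix.transpose_mul, Matrix.transpose_transpose]
    simp [Matrix.mul_assoc]
  rw [hmain, ← real_conjT]
  exact Matrix.posSemidef_conjTranspose_mul_self _

end main

theorem stmt0 {n d : ℕ} (E F : Matrix (Fin n) (Fin d) ℝ)
    (hE : Eᵀ * E = 1) (hF : Fᵀ * F = 1)
    (Ωstar : Matrix (Fin d) (Fin d) ℝ)
    (hΩstar : Ωstarᵀ * Ωstar = 1)
    (hmin : ∀ Ω : Matrix (Fin d) (Fin d) ℝ, Ωᵀ * Ω = 1 →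
      frob (E * Ωstar - F) ≤ frob (E * Ω - F)) :
    frob (E * Ωstar - F) ≤ frob (E * Eᵀ - F * Fᵀ) ∧
    frob (E * Eᵀ - F * Fᵀ) ≤ Real.sqrt 2 * frob (E * Ωstar - F) := by
  set M : Matrix (Fin d) (Fin d) ℝ := Eᵀ * F with hMdef
  have ha : frobSq (E * Ωstar - F) = 2 * (d : ℝ) - 2 * (Ωstarᵀ * M).trace :=
    expandA E F hE hF Ωstar hΩstar
  have hb : frobSq (E * Eᵀ - F * Fᵀ) = 2 * (d : ℝ) - 2 * (Mᵀ * M).trace :=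
    expandB E F hE hF
  obtain ⟨Ω, hΩ, hkey⟩ := key M (contraction_psd E F hE hF)
  -- Claim 1 at frobSq level
  have h1 : frobSq (E * Ωstar - F) ≤ frobSq (E * Eᵀ - F * Fᵀ) := by
    have hmono : frobSq (E * Ωstar - F) ≤ frobSq (E * Ω - F) := by
      have := hmin Ω hΩ
      unfold frob at this
      exact (Real.sqrt_le_sqrt_iff (frobSq_nonneg _)).mp this
    have hΩval : frobSq (E * Ω - F) = 2 * (d : ℝ) - 2 * (Ωᵀ * M).trace :=
      expandA E F hE hF Ω hΩ
    rw [hb]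
    rw [hΩval] at hmono
    linarith
  -- Claim 2 at frobSq level
  have h2 : frobSq (E * Eᵀ - F * Fᵀ) ≤ 2 * frobSq (E * Ωstar - F) := by
    have hC := expandC M Ωstar hΩstar
    have hC0 := frobSq_nonneg (M - Ωstar)
    rw [hC] at hC0
    rw [ha, hb]
    linarith
  constructor
  · exact Real.sqrt_le_sqrt h1
  · unfold frob
    rw [← Real.sqrt_mul (by norm_num : (0:ℝ) ≤ 2)]
    exact Real.sqrt_le_sqrt h2
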